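/- Let ω be a fixed angle with 0 < ω < π. Let b = (b₁, 0) and c = (c₁, 0) with b₁ < c₁. If q' = (x, y) is any point with y > 0 and ∠(b, q', c) = ω, then y ≤ ((c₁ − b₁)/2)·cot(ω/2); that is, among all points on one side of the line bc at which the segment bc subtends the angle ω, the apex of the isosceles triangle, which lies at height ((c₁ − b₁)/2)·cot(ω/2), has maximal distance to the line through b and c. -/

import Mathlib

open Real EuclideanGeometry

/-- The point of the Euclidean plane with coordinates `x` and `y`. -/
def pt (x y : ℝ) : EuclideanSpace ℝ (Fin 2) := WithLp.toLp 2 ![x, y]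

set_option maxHeartbeats 1000000 in
theorem isosceles_apex_has_maximal_height
    (ω b₁ c₁ x y : ℝ) (hω₀ : 0 < ω) (hω₁ : ω < π) (hbc : b₁ < c₁)
    (hy : 0 < y)
    (hang : EuclideanGeometry.angle (pt b₁ 0) (pt x y) (pt c₁ 0) = ω) :
    y ≤ ((c₁ - b₁) / 2) * Real.cot (ω / 2) := by
  set A : ℝ := b₁ - x with hA
  set C : ℝ := c₁ - x with hC
  set Nb : ℝ := Real.sqrt (A ^ 2 + y ^ 2) with hNb
  set Nc : ℝ := Real.sqrt (C ^ 2 + y ^ 2) with hNc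
  have hNb0 : 0 < Nb := Real.sqrt_pos.2 (by positivity)
  have hNc0 : 0 < Nc := Real.sqrt_pos.2 (by positivity)
  have hNbsq : Nb ^ 2 = A ^ 2 + y ^ 2 := Real.sq_sqrt (by positivity)
  have hNcsq : Nc ^ 2 = C ^ 2 + y ^ 2 := Real.sq_sqrt (by positivity)
  set v : EuclideanSpace ℝ (Fin 2) := pt b₁ 0 -ᵥ pt x y with hv
  set w : EuclideanSpace ℝ (Fin 2) := pt c₁ 0 -ᵥ pt x y with hw
  have hv0 : v 0 = A := by simp [hv, pt, hA]
  have hv1 : v 1 = -y := by simp [hv, pt]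
  have hw0 : w 0 = C := by simp [hw, pt, hC]
  have hw1 : w 1 = -y := by simp [hw, pt]
  have hinner : (inner ℝ v w : ℝ) = A * C + y ^ 2 := by
    rw [PiLp.inner_apply, Fin.sum_univ_two, hv0, hv1, hw0, hw1]
    simp
    ring
  have hnormb : ‖v‖ = Nb := by
    rw [EuclideanSpace.norm_eq, Fin.sum_univ_two, hv0, hv1, hNb]
    congr 1
    rw [Real.norm_eq_abs, Real.norm_eq_abs, sq_abs, sq_abs]
    ring
  have hnormc : ‖w‖ = Nc := by
    rw [EuclideanSpace.norm_eq, Fin.sum_univ_two, hw0, hw1, hNc]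
    congr 1
    rw [Real.norm_eq_abs, Real.norm_eq_abs, sq_abs, sq_abs]
    ring
  -- cosine of the angle
  have hcos : Real.cos ω = (A * C + y ^ 2) / (Nb * Nc) := by
    rw [← hang, EuclideanGeometry.angle, InnerProductGeometry.cos_angle,
      ← hv, ← hw, hinner, hnormb, hnormc]
  have hcosmul : Real.cos ω * (Nb * Nc) = A * C + y ^ 2 := by
    rw [hcos]; field_simp
  -- sine of the angle
  have hne : (A ^ 2 + y ^ 2) * (C ^ 2 + y ^ 2) ≠ 0 := by positivity
  have hsin : Real.sin ω = (c₁ - b₁) * y / (Nb * Nc) := by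
    have h1 : Real.sin ω ^ 2 = ((c₁ - b₁) * y / (Nb * Nc)) ^ 2 := by
      rw [Real.sin_sq, hcos, div_pow, div_pow, mul_pow, hNbsq, hNcsq,
        eq_div_iff hne, sub_mul, one_mul, div_mul_cancel₀ _ hne]
      rw [hA, hC]
      ring
    have h2 : 0 ≤ Real.sin ω := Real.sin_nonneg_of_nonneg_of_le_pi hω₀.le hω₁.le
    have h3 : 0 ≤ (c₁ - b₁) * y / (Nb * Nc) :=
      div_nonneg (mul_nonneg (by linarith) hy.le) (by positivity)
    calc Real.sin ω = Real.sqrt (Real.sin ω ^ 2) := (Real.sqrt_sq h2).symm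
      _ = Real.sqrt (((c₁ - b₁) * y / (Nb * Nc)) ^ 2) := by rw [h1]
      _ = (c₁ - b₁) * y / (Nb * Nc) := Real.sqrt_sq h3
  have hsinmul : Real.sin ω * (Nb * Nc) = (c₁ - b₁) * y := by
    rw [hsin]; field_simp
  -- half-angle quantities
  have hs2 : 0 < Real.sin (ω / 2) :=
    Real.sin_pos_of_pos_of_lt_pi (by linarith) (by linarith [Real.pi_pos])
  have hc2 : 0 < Real.cos (ω / 2) :=
    Real.cos_pos_of_mem_Ioo ⟨by linarith [Real.pi_pos], by linarith⟩
  have hsin2 : Real.sin ω = 2 * Real.sin (ω / 2) * Real.cos (ω / 2) := by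
    have := Real.sin_two_mul (ω / 2)
    rwa [show 2 * (ω / 2) = ω by ring] at this
  have hcos2 : Real.cos ω = 2 * Real.cos (ω / 2) ^ 2 - 1 := by
    have := Real.cos_two_mul (ω / 2)
    rwa [show 2 * (ω / 2) = ω by ring] at this
  -- key inequality
  have hkey : y ^ 2 - A * C ≤ Nb * Nc := by
    calc y ^ 2 - A * C ≤ |y ^ 2 - A * C| := le_abs_self _
      _ = Real.sqrt ((y ^ 2 - A * C) ^ 2) := (Real.sqrt_sq_eq_abs _).symm
      _ ≤ Real.sqrt ((A ^ 2 + y ^ 2) * (C ^ 2 + y ^ 2)) :=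
          Real.sqrt_le_sqrt (by nlinarith [sq_nonneg (A + C), sq_nonneg y])
      _ = Nb * Nc := by
          rw [Real.sqrt_mul (by positivity)]
  -- conclude
  rw [Real.cot_eq_cos_div_sin, ← mul_div_assoc, le_div_iff₀ hs2]
  rw [← mul_le_mul_iff_of_pos_right (show (0:ℝ) < 2 * Real.cos (ω/2) * (Nb * Nc) by positivity)]
  have lhs_eq : y * Real.sin (ω / 2) * (2 * Real.cos (ω / 2) * (Nb * Nc)) =
      y * (Real.sin ω * (Nb * Nc)) := by rw [hsin2]; ring
  have rhs_eq : (c₁ - b₁) / 2 * Real.cos (ω / 2) * (2 * Real.cos (ω / 2) * (Nb * Nc)) =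
      (c₁ - b₁) / 2 * ((Real.cos ω + 1) * (Nb * Nc)) := by rw [hcos2]; ring
  rw [lhs_eq, rhs_eq, hsinmul, add_mul, hcosmul, one_mul]
  nlinarith [mul_le_mul_of_nonneg_left hkey (show (0:ℝ) ≤ (c₁ - b₁) / 2 by linarith)]
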